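/- arXiv:1906.01981 — 7 statements merged into one kernel-verified Lean document; each statement's English description precedes it below -/
import Mathlib

section
/- Let θ > 1 be a real number and define φ(t) = (1 − θ + θt − t^θ)/(θ(θ−1))·(−1) = (1 − θ + θt − t^θ)/(θ(1−θ)) for t ≥ 0 (the Cressie–Read divergence generator). Then for any s < 1/(1−θ) (equivalently s such that 1 − s(1−θ) > 0), the convex conjugate satisfies φ*(s) = (1/θ)·(1 − s(1−θ))^{θ/(θ−1)} − 1/θ. -/
open Real

/-- Convex conjugate of the Cressie–Read generator
`φ(t) = (1 − θ + θt − t^θ)/(θ(1−θ))` for `θ > 1`: for `s` with `1 − s(1−θ) > 0`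
(equivalently `s < 1/(1−θ)`), the conjugate value
`(1/θ)·(1 − s(1−θ))^(θ/(θ−1)) − 1/θ` is the least upper bound of
`{s·t − φ(t) : t ≥ 0}` (powers are real powers). -/
theorem cressieRead_conjugate (θ s : ℝ) (hθ : 1 < θ) (hs : 1 - s * (1 - θ) > 0) :
    IsLUB {y : ℝ | ∃ t : ℝ, 0 ≤ t ∧
        y = s * t - (1 - θ + θ * t - t ^ θ) / (θ * (1 - θ))}
      ((1 / θ) * (1 - s * (1 - θ)) ^ (θ / (θ - 1)) - 1 / θ) := by
  have hθ0 : (0:ℝ) < θ := by linarith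
  have hθ1 : θ - 1 ≠ 0 := by linarith
  have h1θ : (1:ℝ) - θ ≠ 0 := by linarith
  set c : ℝ := 1 - s * (1 - θ) with hc
  have hc0 : 0 < c := hs
  set q : ℝ := θ / (θ - 1) with hq
  set t0 : ℝ := c ^ (1 / (θ - 1)) with ht0
  have ht00 : 0 ≤ t0 := rpow_nonneg hc0.le _
  have hcq : c ^ q = t0 * c := by
    have hqeq : q = 1 / (θ - 1) + 1 := by rw [hq]; field_simp; ring
    rw [ht0, hqeq, rpow_add hc0, rpow_one]
  have ht0θ : t0 ^ θ = t0 * c := by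
    rw [ht0, ← rpow_mul hc0.le, ← hcq, hq]
    congr 1
    field_simp
  -- Young's inequality consequence: key inequality
  have key : ∀ t : ℝ, 0 ≤ t → θ * t * c ≤ t ^ θ + (θ - 1) * c ^ q := by
    intro t ht
    have hconj : θ.HolderConjugate q := Real.HolderConjugate.conjExponent hθ
    have hy := Real.young_inequality_of_nonneg ht hc0.le hconj
    have hqval : θ / q = θ - 1 := by rw [hq]; field_simp
    have := mul_le_mul_of_nonneg_left hy hθ0.le
    calc θ * t * c = θ * (t * c) := by ring
      _ ≤ θ * (t ^ θ / θ + c ^ q / q) := this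
      _ = t ^ θ + (θ / q) * c ^ q := by
          have hq0 : q ≠ 0 := by
            rw [hq]; positivity
          field_simp
      _ = t ^ θ + (θ - 1) * c ^ q := by rw [hqval]
  constructor
  · rintro y ⟨t, ht, rfl⟩
    have hk := key t ht
    have hsub : ((1 / θ) * c ^ q - 1 / θ) -
        (s * t - (1 - θ + θ * t - t ^ θ) / (θ * (1 - θ)))
        = (t ^ θ + (θ - 1) * c ^ q - θ * t * c) / (θ * (θ - 1)) := by
      rw [hc]
      field_simp
      ring
    have hpos : 0 ≤ (t ^ θ + (θ - 1) * c ^ q - θ * t * c) / (θ * (θ - 1)) := by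
      apply div_nonneg (by linarith) (by nlinarith)
    linarith [hsub ▸ hpos]
  · intro b hb
    have hmem : (1 / θ) * c ^ q - 1 / θ ∈ {y : ℝ | ∃ t : ℝ, 0 ≤ t ∧
        y = s * t - (1 - θ + θ * t - t ^ θ) / (θ * (1 - θ))} := by
      refine ⟨t0, ht00, ?_⟩
      rw [ht0θ, hcq, hc]
      field_simp
      ring
    exact hb hmem
end

section
/- Let Σ be symmetric positive definite, μ, e ∈ ℝⁿ with e ≠ 0, and define A = eᵀΣ⁻¹e, B = μᵀΣ⁻¹e, C = μᵀΣ⁻¹μ. Let ρ > 0 satisfy 2ρ > C − B²/A, set λ* = B/A − √(B² − A(C − 2ρ))/A (with φ''(1) = 1), and x* = Σ⁻¹(μ − λ*e)/(B − λ*A). Then x* satisfies the constraint x*ᵀe = 1, and the objective value satisfies x*ᵀμ − √(2ρ · x*ᵀΣx*) = λ*. -/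
open Matrix

/-- KKT solution of the mean-deviation portfolio problem (with `φ''(1) = 1`):
with `A = eᵀΣ⁻¹e`, `B = μᵀΣ⁻¹e`, `C = μᵀΣ⁻¹μ`, `2ρ > C − B²/A`,
`λ* = B/A − √(B² − A(C − 2ρ))/A` and `x* = Σ⁻¹(μ − λ*e)/(B − λ*A)`,
the point `x*` satisfies the budget constraint `x*ᵀe = 1` and achieves
objective value `x*ᵀμ − √(2ρ·x*ᵀΣx*) = λ*`. -/
theorem mean_deviation_kkt (n : ℕ) (S : Matrix (Fin n) (Fin n) ℝ) (hS : S.PosDef)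
    (μ e : Fin n → ℝ) (hind : LinearIndependent ℝ ![μ, e])
    (ρ A B C lam : ℝ) (hρ : 0 < ρ)
    (hA : A = e ⬝ᵥ (S⁻¹ *ᵥ e)) (hB : B = μ ⬝ᵥ (S⁻¹ *ᵥ e))
    (hC : C = μ ⬝ᵥ (S⁻¹ *ᵥ μ))
    (hρ' : 2 * ρ > C - B ^ 2 / A)
    (hlam : lam = B / A - Real.sqrt (B ^ 2 - A * (C - 2 * ρ)) / A)
    (x : Fin n → ℝ) (hx : x = (B - lam * A)⁻¹ • (S⁻¹ *ᵥ (μ - lam • e))) :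
    x ⬝ᵥ e = 1 ∧
      x ⬝ᵥ μ - Real.sqrt (2 * ρ * (x ⬝ᵥ (S *ᵥ x))) = lam := by
  have he : e ≠ 0 := by
    have := hind.ne_zero 1
    simpa using this
  have hSinv : (S⁻¹).PosDef := hS.inv
  have hA0 : 0 < A := by
    rw [hA]
    simpa using hSinv.dotProduct_mulVec_pos he
  have hAne : A ≠ 0 := hA0.ne'
  -- D > 0
  set D : ℝ := B ^ 2 - A * (C - 2 * ρ) with hD
  have hD0 : 0 < D := by
    have h1 : A * (2 * ρ) > A * (C - B ^ 2 / A) := by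
      exact (mul_lt_mul_iff_right₀ hA0).mpr hρ'
    have h2 : A * (C - B ^ 2 / A) = A * C - B ^ 2 := by
      field_simp
    nlinarith [h1, h2]
  set s : ℝ := Real.sqrt D with hs
  have hs0 : 0 < s := Real.sqrt_pos.mpr hD0
  have hs2 : s ^ 2 = D := Real.sq_sqrt hD0.le
  have hlamA : B - lam * A = s := by
    rw [hlam]; field_simp; ring
  -- symmetry of S⁻¹
  have hH : (S⁻¹)ᵀ = S⁻¹ := hSinv.1
  have hsym : ∀ u v : Fin n → ℝ, u ⬝ᵥ (S⁻¹ *ᵥ v) = v ⬝ᵥ (S⁻¹ *ᵥ u) := by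
    intro u v
    rw [Matrix.dotProduct_mulVec, ← Matrix.mulVec_transpose, hH, dotProduct_comm]
  set w : Fin n → ℝ := μ - lam • e with hw
  have hSw : S⁻¹ *ᵥ w = S⁻¹ *ᵥ μ - lam • (S⁻¹ *ᵥ e) := by
    rw [hw, Matrix.mulVec_sub, Matrix.mulVec_smul]
  have hew : e ⬝ᵥ (S⁻¹ *ᵥ w) = B - lam * A := by
    rw [hSw, dotProduct_sub, dotProduct_smul, hsym e μ, ← hB, ← hA, smul_eq_mul]
  have hμw : μ ⬝ᵥ (S⁻¹ *ᵥ w) = C - lam * B := by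
    rw [hSw, dotProduct_sub, dotProduct_smul, ← hC, ← hB, smul_eq_mul]
  have hww : w ⬝ᵥ (S⁻¹ *ᵥ w) = C - 2 * lam * B + lam ^ 2 * A := by
    rw [hw, sub_dotProduct, smul_dotProduct, ← hw, hμw, hew, smul_eq_mul]
    ring
  -- quadratic identity
  have hq : C - 2 * lam * B + lam ^ 2 * A = 2 * ρ := by
    have hlA : lam * A = B - s := by linarith [hlamA]
    have key : A * (C - 2 * lam * B + lam ^ 2 * A) = A * (2 * ρ) := by
      have : A * (C - 2 * lam * B + lam ^ 2 * A)
          = A * C - 2 * B * (lam * A) + (lam * A) ^ 2 := by ring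
      rw [this, hlA]
      linear_combination hs2
    exact mul_left_cancel₀ hAne key
  -- S *ᵥ x
  have hSinvUnit : IsUnit S.det := hS.det_pos.ne'.isUnit
  have hSx : S *ᵥ x = (B - lam * A)⁻¹ • w := by
    rw [hx, Matrix.mulVec_smul, Matrix.mulVec_mulVec, Matrix.mul_nonsing_inv S hSinvUnit,
      Matrix.one_mulVec]
  set c : ℝ := (B - lam * A)⁻¹ with hc
  have hcs : c = s⁻¹ := by rw [hc, hlamA]
  have hc0 : 0 < c := by rw [hcs]; exact inv_pos.mpr hs0
  have hxe : x ⬝ᵥ e = 1 := by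
    rw [hx, smul_dotProduct, dotProduct_comm, hew, smul_eq_mul, hlamA, hcs]
    exact inv_mul_cancel₀ hs0.ne'
  refine ⟨hxe, ?_⟩
  have hxμ : x ⬝ᵥ μ = c * (C - lam * B) := by
    rw [hx, smul_dotProduct, dotProduct_comm, hμw, smul_eq_mul]
  have hxSx : x ⬝ᵥ (S *ᵥ x) = c ^ 2 * (2 * ρ) := by
    rw [hSx, hx, smul_dotProduct, dotProduct_smul, smul_eq_mul, smul_eq_mul,
      dotProduct_comm, hww, hq]
    ring
  have hsq : Real.sqrt (2 * ρ * (x ⬝ᵥ (S *ᵥ x))) = 2 * ρ * c := by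
    rw [hxSx]
    have : 2 * ρ * (c ^ 2 * (2 * ρ)) = (2 * ρ * c) ^ 2 := by ring
    rw [this, Real.sqrt_sq (by positivity)]
  rw [hxμ, hsq]
  -- c * (C - lam*B) - 2ρc = lam
  have hCl : C - lam * B - 2 * ρ = lam * (B - lam * A) := by linear_combination hq
  have : c * (C - lam * B) - 2 * ρ * c = c * (lam * (B - lam * A)) := by
    rw [← hCl]; ring
  rw [this, hlamA, hcs]
  field_simp
end

section
/- Let Σ be symmetric positive definite, μ, e ∈ ℝⁿ linearly independent, A = eᵀΣ⁻¹e, B = μᵀΣ⁻¹e, C = μᵀΣ⁻¹μ. For any x ∈ ℝⁿ with xᵀe = 1, the pair (m, s) = (xᵀμ, √(xᵀΣx)) satisfies s² ≥ (A m² − 2B m + C)/(AC − B²). In particular, √(xᵀΣx) ≥ √((A(xᵀμ)² − 2B(xᵀμ) + C)/(AC − B²)). -/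
open Matrix

/-- Efficient-frontier inequality: for `Σ` symmetric positive definite,
`μ, e` linearly independent, `A = eᵀΣ⁻¹e`, `B = μᵀΣ⁻¹e`, `C = μᵀΣ⁻¹μ`,
and any `x` with `xᵀe = 1`, setting `m = xᵀμ` and `s = √(xᵀΣx)` we have
`s² ≥ (Am² − 2Bm + C)/(AC − B²)`; in particular
`√(xᵀΣx) ≥ √((Am² − 2Bm + C)/(AC − B²))`. -/
theorem efficient_frontier (n : ℕ) (S : Matrix (Fin n) (Fin n) ℝ) (hS : S.PosDef)
    (μ e : Fin n → ℝ) (hind : LinearIndependent ℝ ![μ, e])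
    (A B C : ℝ)
    (hA : A = e ⬝ᵥ (S⁻¹ *ᵥ e)) (hB : B = μ ⬝ᵥ (S⁻¹ *ᵥ e))
    (hC : C = μ ⬝ᵥ (S⁻¹ *ᵥ μ))
    (x : Fin n → ℝ) (hx : x ⬝ᵥ e = 1) :
    (Real.sqrt (x ⬝ᵥ (S *ᵥ x))) ^ 2 ≥
        (A * (x ⬝ᵥ μ) ^ 2 - 2 * B * (x ⬝ᵥ μ) + C) / (A * C - B ^ 2) ∧
      Real.sqrt (x ⬝ᵥ (S *ᵥ x)) ≥
        Real.sqrt ((A * (x ⬝ᵥ μ) ^ 2 - 2 * B * (x ⬝ᵥ μ) + C) / (A * C - B ^ 2)) := by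
  have hT : (S⁻¹).PosDef := hS.inv
  have hTpos : ∀ u : Fin n → ℝ, u ≠ 0 → 0 < u ⬝ᵥ (S⁻¹ *ᵥ u) := by
    intro u hu; simpa using hT.dotProduct_mulVec_pos hu
  have hSnn : ∀ u : Fin n → ℝ, 0 ≤ u ⬝ᵥ (S *ᵥ u) := by
    intro u; simpa using hS.posSemidef.dotProduct_mulVec_nonneg u
  have symm : ∀ u v : Fin n → ℝ, u ⬝ᵥ (S⁻¹ *ᵥ v) = v ⬝ᵥ (S⁻¹ *ᵥ u) := by
    intro u v
    rw [dotProduct_mulVec, ← mulVec_transpose, dotProduct_comm,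
      show (S⁻¹)ᵀ = S⁻¹ from hT.1]
  have symmS : ∀ u v : Fin n → ℝ, u ⬝ᵥ (S *ᵥ v) = v ⬝ᵥ (S *ᵥ u) := by
    intro u v
    rw [dotProduct_mulVec, ← mulVec_transpose, dotProduct_comm,
      show Sᵀ = S from hS.1]
  -- A > 0
  have he : e ≠ 0 := by simpa using hind.ne_zero 1
  have hA0 : 0 < A := by rw [hA]; exact hTpos e he
  -- D > 0
  have hu : A • μ - B • e ≠ 0 := by
    intro h
    have h' : A • μ + (-B) • e = 0 := by
      rw [neg_smul, ← sub_eq_add_neg]; exact h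
    have := (LinearIndependent.pair_iff.mp hind A (-B) h').1
    exact hA0.ne' this
  have hval : (A • μ - B • e) ⬝ᵥ (S⁻¹ *ᵥ (A • μ - B • e)) = A * (A * C - B ^ 2) := by
    simp only [mulVec_sub, mulVec_smul, dotProduct_sub, sub_dotProduct,
      dotProduct_smul, smul_dotProduct, smul_eq_mul]
    rw [symm e μ, ← hA, ← hB, ← hC]; ring
  have hD : 0 < A * C - B ^ 2 := by
    have := hTpos _ hu
    rw [hval] at this
    nlinarith
  -- setup
  have hSinv : S * S⁻¹ = 1 := mul_nonsing_inv S (isUnit_iff_ne_zero.mpr hS.det_pos.ne')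
  set m : ℝ := x ⬝ᵥ μ with hm
  set D : ℝ := A * C - B ^ 2 with hDdef
  set α : ℝ := (C - m * B) / D with hα
  set β : ℝ := (m * A - B) / D with hβ
  set w : Fin n → ℝ := α • e + β • μ with hw
  set y : Fin n → ℝ := S⁻¹ *ᵥ w with hy
  have hyw_exp : ∀ v : Fin n → ℝ, v ⬝ᵥ y = α * (e ⬝ᵥ (S⁻¹ *ᵥ v)) + β * (μ ⬝ᵥ (S⁻¹ *ᵥ v)) := by
    intro v
    rw [hy, symm v, hw]
    simp only [add_dotProduct, smul_dotProduct, smul_eq_mul]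
  have hye : y ⬝ᵥ e = 1 := by
    rw [dotProduct_comm, hyw_exp e, ← hA, ← hB, hα, hβ]
    field_simp
    ring
  have hyμ : y ⬝ᵥ μ = m := by
    rw [dotProduct_comm, hyw_exp μ, symm e μ, ← hB, ← hC, hα, hβ]
    field_simp
    ring
  have hSy : S *ᵥ y = w := by
    rw [hy, mulVec_mulVec, hSinv, one_mulVec]
  have hdotw : ∀ v : Fin n → ℝ, v ⬝ᵥ w = α * (v ⬝ᵥ e) + β * (v ⬝ᵥ μ) := by
    intro v
    rw [hw]
    simp only [dotProduct_add, dotProduct_smul, smul_eq_mul]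
  have hySy : y ⬝ᵥ (S *ᵥ y) = (A * m ^ 2 - 2 * B * m + C) / D := by
    rw [hSy, hdotw y, hye, hyμ, hα, hβ]
    field_simp
    ring
  set z : Fin n → ℝ := x - y with hz
  have hzw : z ⬝ᵥ w = 0 := by
    rw [hdotw z, hz]
    simp only [sub_dotProduct]
    rw [hx, hye, hyμ, ← hm]
    ring
  have hxz : x = z + y := by rw [hz]; abel
  have hexpand : x ⬝ᵥ (S *ᵥ x) = z ⬝ᵥ (S *ᵥ z) + y ⬝ᵥ (S *ᵥ y) := by
    conv_lhs => rw [hxz]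
    simp only [mulVec_add, dotProduct_add, add_dotProduct]
    rw [symmS y z, show z ⬝ᵥ (S *ᵥ y) = 0 by rw [hSy]; exact hzw]
    ring
  have hval_nonneg : 0 ≤ (A * m ^ 2 - 2 * B * m + C) / D := by
    rw [← hySy]; exact hSnn y
  have hge : (A * m ^ 2 - 2 * B * m + C) / D ≤ x ⬝ᵥ (S *ᵥ x) := by
    rw [hexpand, ← hySy]
    have := hSnn z
    linarith
  have hsq : (Real.sqrt (x ⬝ᵥ (S *ᵥ x))) ^ 2 = x ⬝ᵥ (S *ᵥ x) :=
    Real.sq_sqrt (hSnn x)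
  constructor
  · rw [hsq]; exact hge
  · exact Real.sqrt_le_sqrt hge
end

section
/- Let Σ be symmetric positive definite, μ, e ∈ ℝⁿ linearly independent, A = eᵀΣ⁻¹e, B = μᵀΣ⁻¹e, C = μᵀΣ⁻¹μ. Suppose κ > 0 and δ ∈ ℝ satisfy C − B²/A < κ² < δ²A + 2δB + C and B + δA > 0. Then the optimization max over x ∈ ℝⁿ with xᵀe = 1 and κ√(xᵀΣx) − xᵀμ ≤ δ of xᵀμ has a feasible point, i.e., there exists x with xᵀe = 1 and κ√(xᵀΣx) ≤ xᵀμ + δ. -/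
open Matrix

private lemma symm_dot {n : ℕ} (M : Matrix (Fin n) (Fin n) ℝ) (hM : Mᵀ = M)
    (u v : Fin n → ℝ) : u ⬝ᵥ (M *ᵥ v) = v ⬝ᵥ (M *ᵥ u) := by
  rw [dotProduct_mulVec, dotProduct_comm, ← mulVec_transpose, hM]

/-- Feasibility of the chance-constrained (VaR-reformulated) portfolio problem:
under `C − B²/A < κ² < δ²A + 2δB + C` and `B + δA > 0` (with `κ > 0`), there is
`x` with `xᵀe = 1` and `κ√(xᵀΣx) − xᵀμ ≤ δ`. -/
theorem cco_feasible (n : ℕ) (S : Matrix (Fin n) (Fin n) ℝ) (hS : S.PosDef)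
    (μ e : Fin n → ℝ) (hind : LinearIndependent ℝ ![μ, e])
    (A B C κ δ : ℝ)
    (hA : A = e ⬝ᵥ (S⁻¹ *ᵥ e)) (hB : B = μ ⬝ᵥ (S⁻¹ *ᵥ e))
    (hC : C = μ ⬝ᵥ (S⁻¹ *ᵥ μ))
    (hκ : 0 < κ) (h1 : C - B ^ 2 / A < κ ^ 2) (h2 : κ ^ 2 < δ ^ 2 * A + 2 * δ * B + C)
    (h3 : 0 < B + δ * A) :
    ∃ x : Fin n → ℝ, x ⬝ᵥ e = 1 ∧
      κ * Real.sqrt (x ⬝ᵥ (S *ᵥ x)) - x ⬝ᵥ μ ≤ δ := by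
  have hSinv : S⁻¹.PosDef := hS.inv
  have hsymm : S⁻¹ᵀ = S⁻¹ := by
    have := hSinv.isHermitian
    simpa [Matrix.IsHermitian, Matrix.conjTranspose_eq_transpose_of_trivial] using this
  -- e ≠ 0
  have he : e ≠ 0 := by
    intro h
    have := hind.ne_zero 1
    simp [h] at this
  have hApos : 0 < A := by rw [hA]; simpa using hSinv.dotProduct_mulVec_pos he
  have hAne : A ≠ 0 := ne_of_gt hApos
  -- notation
  set D : ℝ := C - B ^ 2 / A with hD
  set t : ℝ := δ + B / A with ht
  have htpos : 0 < t := by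
    rw [ht]
    have : t = (B + δ * A) / A := by rw [ht, add_div, mul_div_assoc, div_self hAne, mul_one, add_comm]
    rw [← ht, this]
    positivity
  have hE : 0 < κ ^ 2 - D := by linarith
  set lam : ℝ := t / (κ ^ 2 - D) with hlam
  set γ : ℝ := (1 - lam * B) / A with hγ
  set x : Fin n → ℝ := S⁻¹ *ᵥ (lam • μ + γ • e) with hx
  -- basic dot product facts
  have hBe : e ⬝ᵥ (S⁻¹ *ᵥ μ) = B := by
    rw [hB, symm_dot S⁻¹ hsymm]
  have hxe : x ⬝ᵥ e = 1 := by
    have : x ⬝ᵥ e = e ⬝ᵥ x := dotProduct_comm _ _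
    rw [this, hx, mulVec_add, mulVec_smul, mulVec_smul, dotProduct_add,
      dotProduct_smul, dotProduct_smul, hBe, ← hA]
    simp only [smul_eq_mul]
    rw [hγ]
    field_simp
    ring
  have hxμ : x ⬝ᵥ μ = lam * D + B / A := by
    have : x ⬝ᵥ μ = μ ⬝ᵥ x := dotProduct_comm _ _
    rw [this, hx, mulVec_add, mulVec_smul, mulVec_smul, dotProduct_add,
      dotProduct_smul, dotProduct_smul, ← hC, ← hB]
    simp only [smul_eq_mul]
    rw [hγ, hD]
    field_simp
    ring
  -- x ⬝ᵥ S x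
  have hSx : S *ᵥ x = lam • μ + γ • e := by
    rw [hx, mulVec_mulVec]
    have : S * S⁻¹ = 1 := mul_nonsing_inv S (isUnit_iff_isUnit_det _ |>.1 hS.isUnit)
    rw [this, one_mulVec]
  have hv : x ⬝ᵥ (S *ᵥ x) = lam ^ 2 * D + 1 / A := by
    rw [hSx, dotProduct_add, dotProduct_smul, dotProduct_smul]
    simp only [smul_eq_mul]
    rw [hxμ, hxe, hγ]
    field_simp
    ring
  refine ⟨x, hxe, ?_⟩
  rw [sub_le_iff_le_add, hxμ]
  -- RHS value
  have hrhs : δ + (lam * D + B / A) = t * κ ^ 2 / (κ ^ 2 - D) := by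
    rw [hlam, ht]
    field_simp
    ring
  have hrhspos : 0 < δ + (lam * D + B / A) := by
    rw [hrhs]; positivity
  -- key inequality : κ² v ≤ rhs²
  have hAt : κ ^ 2 - D < A * t ^ 2 := by
    have : δ ^ 2 * A + 2 * δ * B + C = A * t ^ 2 + D := by
      rw [ht, hD]; field_simp; ring
    linarith [h2, this ▸ h2]
  have hkey : κ ^ 2 * (x ⬝ᵥ (S *ᵥ x)) ≤ (δ + (lam * D + B / A)) ^ 2 := by
    rw [hv, hrhs, hlam]
    have hden : (0 : ℝ) < A * (κ ^ 2 - D) ^ 2 := by positivity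
    rw [show κ ^ 2 * ((t / (κ ^ 2 - D)) ^ 2 * D + 1 / A)
        = (κ ^ 2 * t ^ 2 * D * A + κ ^ 2 * (κ ^ 2 - D) ^ 2) / (A * (κ ^ 2 - D) ^ 2) from by
          field_simp,
      show (t * κ ^ 2 / (κ ^ 2 - D)) ^ 2
        = (t ^ 2 * κ ^ 4 * A) / (A * (κ ^ 2 - D) ^ 2) from by
          field_simp,
      div_le_div_iff_of_pos_right hden]
    nlinarith [mul_le_mul_of_nonneg_left hAt.le (mul_pos (pow_pos hκ 2) hE).le,
      mul_pos hApos (pow_pos htpos 2), hE]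
  -- conclude via sqrt
  have hvnn : 0 ≤ x ⬝ᵥ (S *ᵥ x) := by
    rcases eq_or_ne x 0 with h | h
    · simp [h]
    · exact le_of_lt (by simpa using hS.dotProduct_mulVec_pos h)
  have : κ * Real.sqrt (x ⬝ᵥ (S *ᵥ x)) ≤ δ + (lam * D + B / A) := by
    have h4 : Real.sqrt (κ ^ 2 * (x ⬝ᵥ (S *ᵥ x))) ≤ Real.sqrt ((δ + (lam * D + B / A)) ^ 2) :=
      Real.sqrt_le_sqrt hkey
    rwa [Real.sqrt_mul (by positivity), Real.sqrt_sq (le_of_lt hκ),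
      Real.sqrt_sq (le_of_lt hrhspos)] at h4
  linarith
end

section
/- Let Σ be symmetric positive definite, μ, e ∈ ℝⁿ linearly independent, with A = eᵀΣ⁻¹e, B = μᵀΣ⁻¹e, C = μᵀΣ⁻¹μ, and suppose ρ > 0 satisfies 2ρ > C − B²/A. Let v* = B/A − √(2ρA − (AC − B²))/A be the optimal value of the mean-deviation problem max_{xᵀe=1} {xᵀμ − √(2ρ xᵀΣx)}. Suppose κ > 0, δ ∈ ℝ satisfy the feasibility conditions C − B²/A < κ² < δ²A + 2δB + C and B + δA > 0, and let ṽ* be the optimal value of max_{xᵀe=1, κ√(xᵀΣx)−xᵀμ ≤ δ} xᵀμ. Then ṽ* ≥ v*. -/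
open Matrix

private lemma dot_symm' {n : ℕ} (M : Matrix (Fin n) (Fin n) ℝ) (hM : M.IsHermitian)
    (x y : Fin n → ℝ) : x ⬝ᵥ (M *ᵥ y) = y ⬝ᵥ (M *ᵥ x) := by
  rw [dotProduct_mulVec, ← mulVec_transpose, dotProduct_comm]
  congr 1
  rw [← conjTranspose_eq_transpose_of_trivial, hM.eq]

private lemma posdef_dot' {n : ℕ} (M : Matrix (Fin n) (Fin n) ℝ) (hM : M.PosDef)
    (x : Fin n → ℝ) (hx : x ≠ 0) : 0 < x ⬝ᵥ (M *ᵥ x) := by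
  simpa using hM.dotProduct_mulVec_pos hx

private lemma possemidef_dot' {n : ℕ} (M : Matrix (Fin n) (Fin n) ℝ) (hM : M.PosSemidef)
    (x : Fin n → ℝ) : 0 ≤ x ⬝ᵥ (M *ᵥ x) := by
  simpa using hM.dotProduct_mulVec_nonneg x

private lemma cs_mat' {n : ℕ} (M : Matrix (Fin n) (Fin n) ℝ) (hM : M.PosSemidef)
    (x y : Fin n → ℝ) :
    (x ⬝ᵥ (M *ᵥ y)) ^ 2 ≤ (x ⬝ᵥ (M *ᵥ x)) * (y ⬝ᵥ (M *ᵥ y)) := by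
  set a := x ⬝ᵥ (M *ᵥ x)
  set b := x ⬝ᵥ (M *ᵥ y)
  set c := y ⬝ᵥ (M *ᵥ y)
  have h : ∀ t : ℝ, 0 ≤ c * (t * t) + (-2 * b) * t + a := by
    intro t
    have h0 := possemidef_dot' M hM (x - t • y)
    have hsy : y ⬝ᵥ (M *ᵥ x) = b := dot_symm' M hM.1 y x ▸ rfl
    calc 0 ≤ (x - t • y) ⬝ᵥ (M *ᵥ (x - t • y)) := h0
      _ = c * (t * t) + (-2 * b) * t + a := by
          simp [mulVec_sub, mulVec_smul, dotProduct_sub, sub_dotProduct,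
            smul_dotProduct, dotProduct_smul, smul_eq_mul, hsy]
          ring
  have hd := discrim_le_zero h
  simp only [discrim] at hd
  nlinarith

set_option maxHeartbeats 2000000 in
/-- The CCO problem dominates the DRO (mean-deviation) problem: with
`v* = B/A − √(2ρA − (AC − B²))/A` the optimal value of the mean-deviation
problem and `ṽ*` the optimal value (supremum) of the chance-constrained
problem `max {xᵀμ : xᵀe = 1, κ√(xᵀΣx) − xᵀμ ≤ δ}`, we have `ṽ* ≥ v*`. -/
theorem cco_dominates_dro (n : ℕ) (S : Matrix (Fin n) (Fin n) ℝ) (hS : S.PosDef)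
    (μ e : Fin n → ℝ) (hind : LinearIndependent ℝ ![μ, e])
    (A B C ρ κ δ : ℝ)
    (hA : A = e ⬝ᵥ (S⁻¹ *ᵥ e)) (hB : B = μ ⬝ᵥ (S⁻¹ *ᵥ e))
    (hC : C = μ ⬝ᵥ (S⁻¹ *ᵥ μ))
    (hρ : 0 < ρ) (hρ' : 2 * ρ > C - B ^ 2 / A)
    (hκ : 0 < κ) (h1 : C - B ^ 2 / A < κ ^ 2)
    (h2 : κ ^ 2 < δ ^ 2 * A + 2 * δ * B + C) (h3 : 0 < B + δ * A) :
    B / A - Real.sqrt (2 * ρ * A - (A * C - B ^ 2)) / A ≤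
      sSup {m : ℝ | ∃ x : Fin n → ℝ, x ⬝ᵥ e = 1 ∧
        κ * Real.sqrt (x ⬝ᵥ (S *ᵥ x)) - x ⬝ᵥ μ ≤ δ ∧ m = x ⬝ᵥ μ} := by
  have hSi : S⁻¹.PosDef := hS.inv
  have hSiH : S⁻¹.IsHermitian := hSi.1
  have hSinv : S * S⁻¹ = 1 := mul_nonsing_inv S hS.det_pos.ne'.isUnit
  -- symmetry facts
  have hBe : e ⬝ᵥ (S⁻¹ *ᵥ μ) = B := by rw [dot_symm' _ hSiH, hB]
  -- e ≠ 0 and A > 0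
  have he0 : e ≠ 0 := by
    have := hind.ne_zero 1
    simpa using this
  have hA0 : 0 < A := hA ▸ posdef_dot' _ hSi e he0
  -- D := A*C - B^2 > 0
  have hD : 0 < A * C - B ^ 2 := by
    set w := A • μ - B • e with hw
    have hw0 : w ≠ 0 := by
      intro h
      have hli := Fintype.linearIndependent_iff.mp hind ![A, -B]
      have hsum : ∑ i : Fin 2, ![A, -B] i • ![μ, e] i = 0 := by
        simp only [Fin.sum_univ_two, Matrix.cons_val_zero, Matrix.cons_val_one, Matrix.head_cons]
        rw [neg_smul, ← sub_eq_add_neg]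
        exact h
      have := hli hsum 0
      simp at this
      exact absurd this hA0.ne'
    have hval : w ⬝ᵥ (S⁻¹ *ᵥ w) = A * (A * C - B ^ 2) := by
      simp only [hw, mulVec_sub, mulVec_smul, dotProduct_sub, sub_dotProduct,
        smul_dotProduct, dotProduct_smul, smul_eq_mul, ← hA, ← hB, ← hC, hBe]
      ring
    have := posdef_dot' _ hSi w hw0
    rw [hval] at this
    nlinarith
  -- E := κ²A - D > 0
  have hfs : (C - B ^ 2 / A) * A = C * A - B ^ 2 := by field_simp
  have hE : 0 < κ ^ 2 * A - (A * C - B ^ 2) := by nlinarith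
  obtain ⟨E, hEdef⟩ : ∃ E : ℝ, E = κ ^ 2 * A - (A * C - B ^ 2) := ⟨_, rfl⟩
  rw [← hEdef] at hE
  obtain ⟨m, hmdef⟩ : ∃ m : ℝ, m = (κ ^ 2 * B + (A * C - B ^ 2) * δ) / E := ⟨_, rfl⟩
  have hmE : m * E = κ ^ 2 * B + (A * C - B ^ 2) * δ := by
    rw [hmdef]; field_simp
  -- B/A < m
  have hmB : B / A < m := by
    rw [div_lt_iff₀ hA0]
    have k1 : (m * A - B) * E = (A * C - B ^ 2) * (B + δ * A) := by
      linear_combination A * hmE - B * hEdef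
    nlinarith [mul_pos hD h3]
  have hδm : 0 < δ + m := by
    have h4 : δ + B / A = (B + δ * A) / A := by field_simp; ring
    have h5 : 0 < (B + δ * A) / A := div_pos h3 hA0
    linarith only [h4, h5, hmB]
  have hq : κ ^ 2 * (A * m ^ 2 - 2 * B * m + C) ≤ (A * C - B ^ 2) * (δ + m) ^ 2 := by
    have hidden : E * ((A * C - B ^ 2) * (δ + m) ^ 2
        - κ ^ 2 * (A * m ^ 2 - 2 * B * m + C))
        = κ ^ 2 * (A * C - B ^ 2) * (δ ^ 2 * A + 2 * δ * B + C - κ ^ 2)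
          - (m * E - (κ ^ 2 * B + (A * C - B ^ 2) * δ)) ^ 2 := by
      rw [hEdef]; ring
    rw [hmE, sub_self] at hidden
    have hpos : 0 < κ ^ 2 * (A * C - B ^ 2) * (δ ^ 2 * A + 2 * δ * B + C - κ ^ 2) :=
      mul_pos (mul_pos (pow_pos hκ 2) hD) (by linarith)
    nlinarith [hidden, hE, hpos]
  -- the feasible point
  obtain ⟨l, hldef⟩ : ∃ l : ℝ, l = (C - m * B) / (A * C - B ^ 2) := ⟨_, rfl⟩
  obtain ⟨t, htdef⟩ : ∃ t : ℝ, t = (m * A - B) / (A * C - B ^ 2) := ⟨_, rfl⟩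
  obtain ⟨x, hxdef⟩ : ∃ x : Fin n → ℝ, x = S⁻¹ *ᵥ (l • e + t • μ) := ⟨_, rfl⟩
  have hx_e : x ⬝ᵥ e = l * A + t * B := by
    rw [dotProduct_comm, hxdef, mulVec_add, mulVec_smul, mulVec_smul,
      dotProduct_add, dotProduct_smul, dotProduct_smul, smul_eq_mul, smul_eq_mul,
      ← hA, hBe]
  have hx_mu : x ⬝ᵥ μ = l * B + t * C := by
    rw [dotProduct_comm, hxdef, mulVec_add, mulVec_smul, mulVec_smul,
      dotProduct_add, dotProduct_smul, dotProduct_smul, smul_eq_mul, smul_eq_mul,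
      ← hB, ← hC]
  have hxe1 : x ⬝ᵥ e = 1 := by
    rw [hx_e, hldef, htdef]
    rw [div_mul_eq_mul_div, div_mul_eq_mul_div, ← add_div, div_eq_one_iff_eq hD.ne']
    ring
  have hxμ : x ⬝ᵥ μ = m := by
    rw [hx_mu, hldef, htdef]
    rw [div_mul_eq_mul_div, div_mul_eq_mul_div, ← add_div, div_eq_iff hD.ne']
    ring
  have hxSx : x ⬝ᵥ (S *ᵥ x) = (A * m ^ 2 - 2 * B * m + C) / (A * C - B ^ 2) := by
    have hSx : S *ᵥ x = l • e + t • μ := by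
      rw [hxdef, mulVec_mulVec, hSinv, one_mulVec]
    rw [hSx, dotProduct_add, dotProduct_smul, dotProduct_smul, smul_eq_mul,
      smul_eq_mul, hxe1, hxμ, hldef, htdef]
    field_simp
    ring
  have hxSx_le : x ⬝ᵥ (S *ᵥ x) ≤ ((δ + m) / κ) ^ 2 := by
    rw [hxSx, div_pow, div_le_div_iff₀ hD (by positivity)]
    linarith only [hq]
  have hsqrt : Real.sqrt (x ⬝ᵥ (S *ᵥ x)) ≤ (δ + m) / κ := by
    have h0 : 0 ≤ (δ + m) / κ := by positivity
    calc Real.sqrt (x ⬝ᵥ (S *ᵥ x)) ≤ Real.sqrt (((δ + m) / κ) ^ 2) :=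
          Real.sqrt_le_sqrt hxSx_le
      _ = (δ + m) / κ := Real.sqrt_sq h0
  have hcon : κ * Real.sqrt (x ⬝ᵥ (S *ᵥ x)) - x ⬝ᵥ μ ≤ δ := by
    have h6 := mul_le_mul_of_nonneg_left hsqrt hκ.le
    have h7 : κ * ((δ + m) / κ) = δ + m := by field_simp
    rw [hxμ]
    linarith only [h6, h7]
  have hmem : m ∈ {m : ℝ | ∃ x : Fin n → ℝ, x ⬝ᵥ e = 1 ∧
      κ * Real.sqrt (x ⬝ᵥ (S *ᵥ x)) - x ⬝ᵥ μ ≤ δ ∧ m = x ⬝ᵥ μ} :=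
    ⟨x, hxe1, hcon, hxμ.symm⟩
  -- bounded above
  have hCB : 0 < C - B ^ 2 / A := by
    have : C - B ^ 2 / A = (A * C - B ^ 2) / A := by field_simp
    rw [this]; exact div_pos hD hA0
  obtain ⟨β, hβdef⟩ : ∃ β : ℝ, β = Real.sqrt (C - B ^ 2 / A) := ⟨_, rfl⟩
  have hβ0 : 0 ≤ β := hβdef ▸ Real.sqrt_nonneg _
  have hβ2 : β ^ 2 = C - B ^ 2 / A := hβdef ▸ Real.sq_sqrt hCB.le
  have hβκ : β < κ := by
    rw [hβdef]
    exact (Real.sqrt_lt' hκ).mpr h1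
  have hbdd : BddAbove {m : ℝ | ∃ x : Fin n → ℝ, x ⬝ᵥ e = 1 ∧
      κ * Real.sqrt (x ⬝ᵥ (S *ᵥ x)) - x ⬝ᵥ μ ≤ δ ∧ m = x ⬝ᵥ μ} := by
    refine ⟨B / A + β * ((δ + B / A) / (κ - β)), ?_⟩
    rintro m' ⟨x', hx'e, hx'c, rfl⟩
    obtain ⟨s, hsdef⟩ : ∃ s : ℝ, s = Real.sqrt (x' ⬝ᵥ (S *ᵥ x')) := ⟨_, rfl⟩
    rw [← hsdef] at hx'c
    have hs0 : 0 ≤ s := hsdef ▸ Real.sqrt_nonneg _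
    have hss : s ^ 2 = x' ⬝ᵥ (S *ᵥ x') :=
      hsdef ▸ Real.sq_sqrt (possemidef_dot' S hS.posSemidef x')
    obtain ⟨y, hydef⟩ : ∃ y : Fin n → ℝ, y = S⁻¹ *ᵥ (μ - (B / A) • e) := ⟨_, rfl⟩
    have hSy : S *ᵥ y = μ - (B / A) • e := by
      rw [hydef, mulVec_mulVec, hSinv, one_mulVec]
    have hyy : y ⬝ᵥ (S *ᵥ y) = C - B ^ 2 / A := by
      rw [hSy, dotProduct_comm, hydef]
      simp only [mulVec_sub, mulVec_smul, dotProduct_sub, sub_dotProduct,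
        smul_dotProduct, dotProduct_smul, smul_eq_mul, ← hA, ← hB, ← hC, hBe]
      field_simp
      ring
    have hxy : x' ⬝ᵥ (S *ᵥ y) = x' ⬝ᵥ μ - B / A := by
      rw [hSy, dotProduct_sub, dotProduct_smul, smul_eq_mul, hx'e, mul_one]
    have hcs := cs_mat' S hS.posSemidef x' y
    rw [hxy, hyy] at hcs
    have htb : x' ⬝ᵥ μ - B / A ≤ s * β := by
      have hsb0 : 0 ≤ s * β := mul_nonneg hs0 hβ0
      nlinarith only [hcs, hss, hβ2, hsb0]
    have hκβ : 0 < κ - β := by linarith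
    have hsb : s ≤ (δ + B / A) / (κ - β) := by
      rw [le_div_iff₀ hκβ]
      nlinarith only [hx'c, htb, hs0, hβ0]
    have h11 := mul_le_mul_of_nonneg_left hsb hβ0
    linarith only [htb, h11]
  -- conclusion
  have hv : B / A - Real.sqrt (2 * ρ * A - (A * C - B ^ 2)) / A ≤ B / A := by
    have h8 : 0 ≤ Real.sqrt (2 * ρ * A - (A * C - B ^ 2)) / A :=
      div_nonneg (Real.sqrt_nonneg _) hA0.le
    linarith only [h8]
  exact le_trans (le_trans hv hmB.le) (le_csSup hbdd hmem)
end

section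
/- Let φ: (0,∞) → ℝ be twice continuously differentiable and convex with φ(1) = 0, φ'(1) = 0, and φ''(1) > 0. Then the second-order Taylor expansion of the conjugate φ* at 0 is φ*(s) = s + s²/(2φ''(1)) + o(s²) as s → 0. -/
open Filter Set Asymptotics Topology

/-- Second-order expansion of the convex conjugate at `0`: if `φ` is twice
continuously differentiable and convex on `(0,∞)` with `φ(1) = 0`, `φ'(1) = 0`,
`φ''(1) > 0`, then `φ*(s) = s + s²/(2φ''(1)) + o(s²)` as `s → 0`, where
`φ*(s) = sup_{t > 0} (st − φ(t))`. -/
theorem conjugate_second_order_expansion (φ : ℝ → ℝ)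
    (hsm : ContDiffOn ℝ 2 φ (Set.Ioi 0))
    (hconv : ConvexOn ℝ (Set.Ioi 0) φ)
    (h1 : φ 1 = 0) (h1' : deriv φ 1 = 0) (h1'' : 0 < deriv (deriv φ) 1) :
    Asymptotics.IsLittleO (nhds (0 : ℝ))
      (fun s : ℝ => sSup {y : ℝ | ∃ t : ℝ, 0 < t ∧ y = s * t - φ t} -
        (s + s ^ 2 / (2 * deriv (deriv φ) 1)))
      (fun s : ℝ => s ^ 2) := by
  have hopen : IsOpen (Set.Ioi (0:ℝ)) := isOpen_Ioi
  have h1mem : (1:ℝ) ∈ Set.Ioi 0 := Set.mem_Ioi.2 one_pos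
  set c := deriv (deriv φ) 1 with hcdef
  have hcne : c ≠ 0 := ne_of_gt h1''
  have hψcd : ContDiffOn ℝ 1 (deriv φ) (Set.Ioi 0) :=
    hsm.deriv_of_isOpen hopen (by norm_num)
  have hψat : ContDiffAt ℝ 1 (deriv φ) 1 := hψcd.contDiffAt (hopen.mem_nhds h1mem)
  have hψstrict : HasStrictDerivAt (deriv φ) c 1 := hψat.hasStrictDerivAt one_ne_zero
  set e : ℝ ≃L[ℝ] ℝ := ContinuousLinearEquiv.unitsEquivAut ℝ (Units.mk0 c hcne) with hedef
  have he : HasFDerivAt (deriv φ) (e : ℝ →L[ℝ] ℝ) 1 := by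
    have h := hψstrict.hasDerivAt.hasFDerivAt
    refine h.congr_fderiv ?_
    ext
    simp [hedef]
  set g : ℝ → ℝ := hψat.localInverse he one_ne_zero with hgdef
  have hleft : ∀ᶠ x in 𝓝 (1:ℝ), g (deriv φ x) = x :=
    (hψat.hasStrictFDerivAt' he one_ne_zero).eventually_left_inverse
  have hright0 : ∀ᶠ s in 𝓝 (0:ℝ), deriv φ (g s) = s := by
    have h := (hψat.hasStrictFDerivAt' he one_ne_zero).eventually_right_inverse
    rwa [h1'] at h
  have hg0 : g 0 = 1 := by
    have h := hψat.localInverse_apply_image he one_ne_zero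
    rwa [h1'] at h
  have hgstrict : HasStrictDerivAt g c⁻¹ 0 := by
    have h := hψstrict.to_local_left_inverse hcne hleft
    rwa [h1'] at h
  have hgC : ContDiffAt ℝ 1 g 0 := by
    have h := hψat.to_localInverse he one_ne_zero
    rwa [h1'] at h
  have hgdiff : ∀ᶠ s in 𝓝 (0:ℝ), DifferentiableAt ℝ g s := by
    filter_upwards [hgC.eventually (by norm_num)] with s hs
    exact hs.differentiableAt one_ne_zero
  have hgcont : ContinuousAt g 0 := hgC.continuousAt
  have hgtend : Tendsto g (𝓝 0) (𝓝 1) := hg0 ▸ hgcont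
  have hgmem : ∀ᶠ s in 𝓝 (0:ℝ), g s ∈ Set.Ioi (0:ℝ) := hgtend (hopen.mem_nhds h1mem)
  have hφdiff : ∀ t ∈ Set.Ioi (0:ℝ), HasDerivAt φ (deriv φ t) t := fun t ht =>
    ((hsm.contDiffAt (hopen.mem_nhds ht)).differentiableAt (by norm_num)).hasDerivAt
  -- tangent line inequality
  have tangent : ∀ t₀ ∈ Set.Ioi (0:ℝ), ∀ t ∈ Set.Ioi (0:ℝ),
      φ t₀ + deriv φ t₀ * (t - t₀) ≤ φ t := by
    intro t₀ ht₀ t ht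
    rcases lt_trichotomy t t₀ with h | h | h
    · have hs := hconv.slope_le_deriv ht ht₀ h (hφdiff t₀ ht₀).differentiableAt
      rw [slope_def_field] at hs
      rw [div_le_iff₀ (by linarith)] at hs
      nlinarith
    · simp [h]
    · have hs := hconv.deriv_le_slope ht₀ ht h (hφdiff t₀ ht₀).differentiableAt
      rw [slope_def_field] at hs
      rw [le_div_iff₀ (by linarith)] at hs
      nlinarith
  -- eventual identification of the supremum
  have hsup : ∀ᶠ s in 𝓝 (0:ℝ),
      sSup {y : ℝ | ∃ t : ℝ, 0 < t ∧ y = s * t - φ t} = s * g s - φ (g s) := by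
    filter_upwards [hright0, hgmem] with s hr hm
    have hbound : ∀ y ∈ {y : ℝ | ∃ t : ℝ, 0 < t ∧ y = s * t - φ t},
        y ≤ s * g s - φ (g s) := by
      rintro y ⟨t, ht, rfl⟩
      have h := tangent (g s) hm t ht
      rw [hr] at h
      linarith
    refine le_antisymm (csSup_le ⟨s * 1 - φ 1, 1, one_pos, rfl⟩ hbound)
      (le_csSup ⟨_, hbound⟩ ⟨g s, hm, rfl⟩)
  -- reduce to the smooth function
  have hEq : (fun s : ℝ => sSup {y : ℝ | ∃ t : ℝ, 0 < t ∧ y = s * t - φ t} -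
        (s + s ^ 2 / (2 * c))) =ᶠ[𝓝 0]
      (fun s : ℝ => s * g s - φ (g s) - (s + s ^ 2 / (2 * c))) := by
    filter_upwards [hsup] with s hs
    rw [hs]
  refine hEq.trans_isLittleO ?_
  set F : ℝ → ℝ := fun s => s * g s - φ (g s) - (s + s ^ 2 / (2 * c)) with hF
  have hF0 : F 0 = 0 := by simp [hF, hg0, h1]
  -- derivative of F near 0
  have hFderiv : ∀ᶠ s in 𝓝 (0:ℝ), HasDerivAt F (g s - 1 - s / c) s := by
    filter_upwards [hgdiff, hright0, hgmem] with s hds hr hm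
    have h₁ : HasDerivAt (fun x : ℝ => x * g x) (1 * g s + s * deriv g s) s :=
      (hasDerivAt_id s).mul hds.hasDerivAt
    have h₂ : HasDerivAt (fun x : ℝ => φ (g x)) (deriv φ (g s) * deriv g s) s :=
      (hφdiff (g s) hm).comp s hds.hasDerivAt
    have h₃ : HasDerivAt (fun x : ℝ => x + x ^ 2 / (2 * c))
        (1 + (↑2 * s ^ 1) / (2 * c)) s :=
      (hasDerivAt_id s).add ((hasDerivAt_pow 2 s).div_const (2 * c))
    have h := (h₁.sub h₂).sub h₃
    refine h.congr_deriv (Eq.symm ?_)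
    rw [hr]
    field_simp
    ring
  -- limit of F'/(s^2)' along punctured nhds
  have hratio : Tendsto (fun s : ℝ => (g s - 1 - s / c) / (2 * s)) (𝓝[≠] 0) (𝓝 0) := by
    have ho : (fun s : ℝ => g s - 1 - s / c) =o[𝓝 0] (fun s : ℝ => s) := by
      have h := hgstrict.hasDerivAt
      rw [hasDerivAt_iff_isLittleO] at h
      simpa [hg0, div_eq_mul_inv, mul_comm] using h
    have h2 : Tendsto (fun s : ℝ => (g s - 1 - s / c) / s) (𝓝 0) (𝓝 0) :=
      ho.tendsto_div_nhds_zero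
    have h3 : Tendsto (fun s : ℝ => (g s - 1 - s / c) / s / 2) (𝓝 0) (𝓝 (0 / 2)) :=
      h2.div_const 2
    rw [zero_div] at h3
    refine (tendsto_nhdsWithin_of_tendsto_nhds h3).congr (fun s => ?_)
    rw [div_div]
    ring_nf
  -- numerator and denominator tend to 0
  have hFcont : ContinuousAt F 0 := by
    have : ContinuousAt φ (g 0) := by
      rw [hg0]
      exact (hφdiff 1 h1mem).differentiableAt.continuousAt
    exact ((continuousAt_id.mul hgcont).sub (this.comp hgcont)).sub (by fun_prop)
  have hFto0 : Tendsto F (𝓝[≠] 0) (𝓝 0) := by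
    have := hFcont.tendsto
    rw [hF0] at this
    exact tendsto_nhdsWithin_of_tendsto_nhds this
  have hsq : Tendsto (fun s : ℝ => s ^ 2) (𝓝[≠] (0:ℝ)) (𝓝 0) := by
    have : Tendsto (fun s : ℝ => s ^ 2) (𝓝 (0:ℝ)) (𝓝 (0 ^ 2)) := (continuous_pow 2).tendsto 0
    rw [zero_pow (by norm_num)] at this
    exact tendsto_nhdsWithin_of_tendsto_nhds this
  have hlhop : Tendsto (fun s : ℝ => F s / s ^ 2) (𝓝[≠] 0) (𝓝 0) := by
    refine HasDerivAt.lhopital_zero_nhdsNE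
      (f' := fun s => g s - 1 - s / c) (g' := fun s => 2 * s)
      (eventually_nhdsWithin_of_eventually_nhds hFderiv) ?_ ?_ hFto0 hsq hratio
    · refine Eventually.of_forall (fun s => ?_)
      simpa [mul_comm] using hasDerivAt_pow 2 s
    · filter_upwards [self_mem_nhdsWithin] with s hs
      exact mul_ne_zero two_ne_zero hs
  -- conclude
  rw [isLittleO_iff_tendsto' (by
    refine Eventually.of_forall (fun s hs => ?_)
    have : s = 0 := by
      have := pow_eq_zero_iff (n := 2) (by norm_num) |>.mp hs
      exact this
    rw [this, hF0])]
  have hfull : 𝓝[≠] (0:ℝ) ⊔ pure 0 = 𝓝 0 := nhdsNE_sup_pure 0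
  have hpure : Tendsto (fun x : ℝ => F x / x ^ 2) (pure 0) (𝓝 0) := by
    have h := tendsto_pure_nhds (fun x : ℝ => F x / x ^ 2) 0
    simpa [hF0] using h
  have hfin := hlhop.sup hpure
  rwa [hfull] at hfin
end

section
/- Let Σ be symmetric positive definite, μ, e ∈ ℝⁿ linearly independent, and suppose x̃* ∈ ℝⁿ is optimal for max {xᵀμ : xᵀe = 1, κ√(xᵀΣx) − xᵀμ ≤ δ} with κ, δ satisfying C − B²/A < κ² < δ²A + 2δB + C and B + δA > 0 (A, B, C as before). Then the chance/VaR constraint is active at the optimum: κ√(x̃*ᵀΣx̃*) − x̃*ᵀμ = δ. -/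
open Matrix

/-- The VaR/chance constraint is active at any optimum of the chance-constrained
portfolio problem: if `x̃*` is feasible (`x̃*ᵀe = 1`, `κ√(x̃*ᵀΣx̃*) − x̃*ᵀμ ≤ δ`)
and maximizes `xᵀμ` over the feasible set, then
`κ√(x̃*ᵀΣx̃*) − x̃*ᵀμ = δ`. -/
theorem cco_constraint_active (n : ℕ) (S : Matrix (Fin n) (Fin n) ℝ)
    (hS : S.PosDef) (μ e : Fin n → ℝ) (hind : LinearIndependent ℝ ![μ, e])
    (A B C κ δ : ℝ)
    (hA : A = e ⬝ᵥ (S⁻¹ *ᵥ e)) (hB : B = μ ⬝ᵥ (S⁻¹ *ᵥ e))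
    (hC : C = μ ⬝ᵥ (S⁻¹ *ᵥ μ))
    (hκ : 0 < κ) (h1 : C - B ^ 2 / A < κ ^ 2)
    (h2 : κ ^ 2 < δ ^ 2 * A + 2 * δ * B + C) (h3 : 0 < B + δ * A)
    (xstar : Fin n → ℝ)
    (hfeas1 : xstar ⬝ᵥ e = 1)
    (hfeas2 : κ * Real.sqrt (xstar ⬝ᵥ (S *ᵥ xstar)) - xstar ⬝ᵥ μ ≤ δ)
    (hopt : ∀ y : Fin n → ℝ, y ⬝ᵥ e = 1 →
      κ * Real.sqrt (y ⬝ᵥ (S *ᵥ y)) - y ⬝ᵥ μ ≤ δ → y ⬝ᵥ μ ≤ xstar ⬝ᵥ μ) :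
    κ * Real.sqrt (xstar ⬝ᵥ (S *ᵥ xstar)) - xstar ⬝ᵥ μ = δ := by
  by_contra hne
  have hlt : κ * Real.sqrt (xstar ⬝ᵥ (S *ᵥ xstar)) - xstar ⬝ᵥ μ < δ :=
    lt_of_le_of_ne hfeas2 hne
  obtain ⟨he0, hsm⟩ := linearIndependent_fin2.mp hind
  simp only [Matrix.cons_val_one, Matrix.head_cons, Matrix.cons_val_zero] at he0 hsm
  have hee : e ⬝ᵥ e ≠ 0 := fun h => he0 ((dotProduct_self_eq_zero).mp h)
  set c : ℝ := (μ ⬝ᵥ e) / (e ⬝ᵥ e) with hc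
  set d : Fin n → ℝ := μ - c • e with hd
  have hde : d ⬝ᵥ e = 0 := by
    simp only [hd, sub_dotProduct, smul_dotProduct, smul_eq_mul, hc]
    field_simp
    ring
  have hμeq : μ = d + c • e := by simp [hd]
  have hdd_nonneg : 0 ≤ d ⬝ᵥ d := by
    unfold dotProduct
    exact Finset.sum_nonneg fun i _ => mul_self_nonneg _
  have hd0 : d ≠ 0 := by
    intro h
    exact hsm c (by rw [hμeq, h, zero_add])
  have hdd : 0 < d ⬝ᵥ d :=
    lt_of_le_of_ne hdd_nonneg (fun h => hd0 ((dotProduct_self_eq_zero).mp h.symm))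
  have hdμ : d ⬝ᵥ μ = d ⬝ᵥ d := by
    rw [hμeq, dotProduct_add, dotProduct_smul, smul_eq_mul]
    -- d ⬝ᵥ e = 0, but careful: we have hde : d ⬝ᵥ e = 0
    rw [hde, mul_zero, add_zero]
  have hdμpos : 0 < d ⬝ᵥ μ := hdμ ▸ hdd
  -- quadratic expansion
  have key : ∀ t : ℝ, (xstar + t • d) ⬝ᵥ (S *ᵥ (xstar + t • d)) =
      xstar ⬝ᵥ (S *ᵥ xstar) + t * (d ⬝ᵥ (S *ᵥ xstar)) + t * (xstar ⬝ᵥ (S *ᵥ d))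
        + t ^ 2 * (d ⬝ᵥ (S *ᵥ d)) := by
    intro t
    simp only [mulVec_add, mulVec_smul, add_dotProduct, dotProduct_add,
      smul_dotProduct, dotProduct_smul, smul_eq_mul]
    ring
  set f : ℝ → ℝ := fun t =>
    κ * Real.sqrt (xstar ⬝ᵥ (S *ᵥ xstar) + t * (d ⬝ᵥ (S *ᵥ xstar))
      + t * (xstar ⬝ᵥ (S *ᵥ d)) + t ^ 2 * (d ⬝ᵥ (S *ᵥ d)))
      - (xstar ⬝ᵥ μ + t * (d ⬝ᵥ μ)) with hf
  have hcont : Continuous f := by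
    apply Continuous.sub
    · exact continuous_const.mul (Real.continuous_sqrt.comp (by fun_prop))
    · fun_prop
  have hf0 : f 0 < δ := by simpa [hf] using hlt
  have hevt : ∀ᶠ t in nhds (0 : ℝ), f t < δ :=
    hcont.continuousAt.eventually_lt continuousAt_const hf0
  have hevt' : ∀ᶠ t in nhdsWithin (0 : ℝ) (Set.Ioi 0), f t < δ :=
    hevt.filter_mono nhdsWithin_le_nhds
  obtain ⟨t, hft, ht⟩ := (hevt'.and eventually_mem_nhdsWithin).exists
  have htpos : 0 < t := ht
  have hye : (xstar + t • d) ⬝ᵥ e = 1 := by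
    rw [add_dotProduct, smul_dotProduct, smul_eq_mul, hde, mul_zero, add_zero, hfeas1]
  have hyμ : (xstar + t • d) ⬝ᵥ μ = xstar ⬝ᵥ μ + t * (d ⬝ᵥ μ) := by
    rw [add_dotProduct, smul_dotProduct, smul_eq_mul]
  have hycon : κ * Real.sqrt ((xstar + t • d) ⬝ᵥ (S *ᵥ (xstar + t • d)))
      - (xstar + t • d) ⬝ᵥ μ ≤ δ := by
    rw [key t, hyμ]
    exact le_of_lt hft
  have hle := hopt (xstar + t • d) hye hycon
  rw [hyμ] at hle
  nlinarith [mul_pos htpos hdμpos]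
end
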